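/- Let n = 2^k with k ≥ 1, and let s_k be the optimal magnitude sequence defined by s_1 = [2^{k-1}], s_{j+1} = s_j ++ [2^{k-1-j}] ++ s_j. For every function d : Fin (2^k - 1) → {+1, -1} (Derek's choice of directions), the set of partial sums {0} ∪ {Σ_{i<t} d(i)·s_k(i) mod 2^k : t = 1, ..., 2^k - 1} equals all of Z/2^k Z. In other words, regardless of the signs chosen, the token visits all n positions. -/
import Mathlib


/-- The doubling magnitude sequence for the Magnus-Derek game on `2^k` nodes. -/
def magSeq (k : ℕ) : ℕ → List ℕ
  | 0 => []
  | 1 => [2 ^ (k - 1)]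
  | j + 2 => magSeq k (j + 1) ++ [2 ^ (k - 1 - (j + 1))] ++ magSeq k (j + 1)

lemma magSeq_length (k : ℕ) : ∀ j, (magSeq k j).length = 2 ^ j - 1
  | 0 => by simp [magSeq]
  | 1 => by simp [magSeq]
  | j + 2 => by
    have h1 : 1 ≤ 2 ^ (j + 1) := Nat.one_le_two_pow
    have h2 : 2 ^ (j + 2) = 2 * 2 ^ (j + 1) := by ring
    simp [magSeq, List.length_append, magSeq_length k (j + 1)]
    omega

lemma magSeq_mem_dvd (k : ℕ) : ∀ j, ∀ x ∈ magSeq k j, 2 ^ (k - j) ∣ x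
  | 0 => by simp [magSeq]
  | 1 => by
    intro x hx
    simp [magSeq] at hx
    subst hx
    exact dvd_refl _
  | j + 2 => by
    intro x hx
    simp only [magSeq, List.mem_append, List.mem_singleton] at hx
    rcases hx with (hx | rfl) | hx
    · exact dvd_trans (pow_dvd_pow 2 (by omega)) (magSeq_mem_dvd k (j + 1) x hx)
    · exact pow_dvd_pow 2 (by omega)
    · exact dvd_trans (pow_dvd_pow 2 (by omega)) (magSeq_mem_dvd k (j + 1) x hx)

lemma magSeq_getD_dvd (k j i : ℕ) : (2 : ℤ) ^ (k - j) ∣ ((magSeq k j).getD i 0 : ℤ) := by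
  by_cases h : i < (magSeq k j).length
  · have he : (magSeq k j).getD i 0 ∈ magSeq k j := by
      rw [List.getD_eq_getElem _ 0 h]; exact List.getElem_mem h
    have hm := magSeq_mem_dvd k j _ he
    exact_mod_cast Int.natCast_dvd_natCast.2 hm
  · rw [List.getD_eq_default _ _ (le_of_not_gt h)]
    simp

lemma cast_eq_of_dvd {k : ℕ} {a b : ℤ} (h : (2 ^ k : ℤ) ∣ b - a) :
    ((a : ZMod (2 ^ k)) = (b : ZMod (2 ^ k))) := by
  refine (ZMod.intCast_eq_intCast_iff _ _ _).2 (Int.modEq_iff_dvd.2 ?_)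
  push_cast
  exact h

lemma key (k : ℕ) : ∀ j, 1 ≤ j → j ≤ k → ∀ d : ℕ → ℤ, (∀ i, d i = 1 ∨ d i = -1) →
    ∀ m : ℤ, ∃ t ≤ 2 ^ j - 1,
      ((∑ i ∈ Finset.range t, d i * ((magSeq k j).getD i 0) : ℤ) : ZMod (2 ^ k))
        = ((m * 2 ^ (k - j) : ℤ) : ZMod (2 ^ k)) := by
  intro j hj
  induction j, hj using Nat.le_induction with
  | base =>
    intro _ d hd m
    have hk2 : (2 : ℤ) ^ k = 2 * 2 ^ (k - 1) := by
      conv_lhs => rw [show k = (k - 1) + 1 by omega]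
      ring
    rcases Int.even_or_odd m with ⟨m₁, hm⟩ | ⟨m₁, hm⟩
    · refine ⟨0, by omega, ?_⟩
      simp only [Finset.range_zero, Finset.sum_empty]
      have := cast_eq_of_dvd (k := k) (a := 0) (b := m * 2 ^ (k - 1)) ⟨m₁, by rw [hm, hk2]; ring⟩
      simpa using this
    · refine ⟨1, by omega, ?_⟩
      have hg : (magSeq k 1).getD 0 0 = 2 ^ (k - 1) := by simp [magSeq]
      rw [Finset.sum_range_one, hg]
      apply cast_eq_of_dvd
      push_cast
      rcases hd 0 with h0 | h0 <;> rw [h0, hm]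
      · exact ⟨m₁, by rw [hk2]; ring⟩
      · exact ⟨m₁ + 1, by rw [hk2]; ring⟩
  | succ j hj ih =>
    intro hjk d hd m
    have hjk' : j ≤ k := by omega
    obtain ⟨j', rfl⟩ : ∃ j', j = j' + 1 := ⟨j - 1, by omega⟩
    set j := j' + 1 with hjdef
    set s := magSeq k j with hs
    have hlen : s.length = 2 ^ j - 1 := magSeq_length k j
    have hL : magSeq k (j + 1) = s ++ [2 ^ (k - 1 - j)] ++ s := rfl
    have h1 : 1 ≤ 2 ^ j := Nat.one_le_two_pow
    have hp : 2 ^ (j + 1) = 2 * 2 ^ j := by ring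
    have h2 : (2 : ℤ) ^ (k - j) = 2 * 2 ^ (k - (j + 1)) := by
      conv_lhs => rw [show k - j = (k - (j + 1)) + 1 by omega]
      ring
    have hmid : ((2 : ℤ)) ^ (k - 1 - j) = 2 ^ (k - (j + 1)) := by
      rw [show k - 1 - j = k - (j + 1) by omega]
    -- getD lemmas
    have hgetD_lo : ∀ i < 2 ^ j - 1, (magSeq k (j + 1)).getD i 0 = s.getD i 0 := by
      intro i hi
      have e1 : i < (s ++ [2 ^ (k - 1 - j)]).length := by
        rw [List.length_append, hlen, List.length_singleton]; omega
      have e2 : i < s.length := by rw [hlen]; exact hi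
      rw [hL, List.getD_append _ _ _ _ e1, List.getD_append _ _ _ _ e2]
    have hgetD_mid : (magSeq k (j + 1)).getD (2 ^ j - 1) 0 = 2 ^ (k - 1 - j) := by
      have e1 : 2 ^ j - 1 < (s ++ [2 ^ (k - 1 - j)]).length := by
        rw [List.length_append, hlen, List.length_singleton]; omega
      have e2 : s.length ≤ 2 ^ j - 1 := by rw [hlen]
      rw [hL, List.getD_append _ _ _ _ e1, List.getD_append_right _ _ _ _ e2, hlen]
      simp
    have hgetD_hi : ∀ i, (magSeq k (j + 1)).getD (2 ^ j + i) 0 = s.getD i 0 := by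
      intro i
      have e1 : (s ++ [2 ^ (k - 1 - j)]).length ≤ 2 ^ j + i := by
        rw [List.length_append, hlen, List.length_singleton]; omega
      rw [hL, List.getD_append_right _ _ _ _ e1]
      congr 1
      rw [List.length_append, hlen]
      simp
      omega
    rcases Int.even_or_odd m with ⟨m₁, hm⟩ | ⟨m₁, hm⟩
    · -- even: use a prefix of the first copy
      obtain ⟨t, ht, hsum⟩ := ih hjk' d hd m₁
      refine ⟨t, by omega, ?_⟩
      have hcong : (∑ i ∈ Finset.range t, d i * ((magSeq k (j + 1)).getD i 0) : ℤ)
          = ∑ i ∈ Finset.range t, d i * (s.getD i 0) := by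
        refine Finset.sum_congr rfl fun i hi => ?_
        rw [hgetD_lo i (by simp at hi; omega)]
      rw [hcong, hsum]
      apply cast_eq_of_dvd
      exact ⟨0, by rw [hm, h2]; ring⟩
    · -- odd
      have hS : (2 : ℤ) ^ (k - j) ∣ ∑ i ∈ Finset.range (2 ^ j - 1), d i * (s.getD i 0 : ℤ) :=
        Finset.dvd_sum fun i _ => (magSeq_getD_dvd k j i).mul_left _
      obtain ⟨q, hq⟩ := hS
      have hd' : ∀ i, d (2 ^ j + i) = 1 ∨ d (2 ^ j + i) = -1 := fun i => hd _
      have main : ∀ m' : ℤ,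
          ((∑ i ∈ Finset.range (2 ^ j - 1), d i * (s.getD i 0 : ℤ))
              + d (2 ^ j - 1) * 2 ^ (k - 1 - j) + m' * 2 ^ (k - j) = m * 2 ^ (k - (j + 1))) →
          ∃ t ≤ 2 ^ (j + 1) - 1,
            ((∑ i ∈ Finset.range t, d i * ((magSeq k (j + 1)).getD i 0) : ℤ) : ZMod (2 ^ k))
              = ((m * 2 ^ (k - (j + 1)) : ℤ) : ZMod (2 ^ k)) := by
        intro m' heq
        obtain ⟨t, ht, hsum⟩ := ih hjk' (fun i => d (2 ^ j + i)) hd' m'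
        refine ⟨2 ^ j + t, by omega, ?_⟩
        rw [Finset.sum_range_add]
        have hfirst : (∑ i ∈ Finset.range (2 ^ j), d i * ((magSeq k (j + 1)).getD i 0 : ℤ))
            = (∑ i ∈ Finset.range (2 ^ j - 1), d i * (s.getD i 0 : ℤ))
              + d (2 ^ j - 1) * 2 ^ (k - 1 - j) := by
          rw [show 2 ^ j = (2 ^ j - 1) + 1 by omega, Finset.sum_range_succ]
          congr 1
          · exact Finset.sum_congr rfl fun i hi => by
              rw [hgetD_lo i (Finset.mem_range.mp hi)]
          · rw [hgetD_mid]; push_cast; ring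
        have hsecond :
            (∑ i ∈ Finset.range t, d (2 ^ j + i) * ((magSeq k (j + 1)).getD (2 ^ j + i) 0 : ℤ))
            = ∑ i ∈ Finset.range t, d (2 ^ j + i) * (s.getD i 0 : ℤ) :=
          Finset.sum_congr rfl fun i _ => by rw [hgetD_hi i]
        rw [hfirst, hsecond, Int.cast_add]
        have hsum' : ((∑ i ∈ Finset.range t, d (2 ^ j + i) * (s.getD i 0 : ℤ) : ℤ) : ZMod (2 ^ k))
            = ((m' * 2 ^ (k - j) : ℤ) : ZMod (2 ^ k)) := hsum
        rw [hsum', ← Int.cast_add]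
        exact congrArg _ (by linarith [heq])
      rcases hd (2 ^ j - 1) with h | h
      · exact main (m₁ - q) (by rw [hq, hm, h, h2, hmid]; ring)
      · exact main (m₁ + 1 - q) (by rw [hq, hm, h, h2, hmid]; ring)


theorem stmt_1 (k : ℕ) (hk : 1 ≤ k) (d : ℕ → ℤ) (hd : ∀ i, d i = 1 ∨ d i = -1) :
    ∀ x : ZMod (2 ^ k), ∃ t ≤ 2 ^ k - 1,
      ((∑ i ∈ Finset.range t, d i * ((magSeq k k).getD i 0) : ℤ) : ZMod (2 ^ k)) = x := by
  intro x
  haveI : NeZero (2 ^ k) := ⟨by positivity⟩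
  obtain ⟨t, ht, hsum⟩ := key k k hk le_rfl d hd (x.val : ℤ)
  refine ⟨t, ht, ?_⟩
  rw [hsum]
  simp [ZMod.natCast_val, ZMod.cast_id]
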